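/- For every real θ, the noiseless non-local-magic state v_θ = cos(θ/2) |00⟩ − i·sin(θ/2) |11⟩ ∈ ℂ² ⊗ ℂ² has stabilizer 2-Rényi entropy M₂(v_θ v_θᴴ) = log₂( 8 / (7 + cos(4θ)) ). In particular, at θ = π/2 (the Bell state) the stabilizer entropy vanishes. -/

import Mathlib

noncomputable section
open Matrix Kronecker

/-- The four single-qubit Pauli matrices I, X, Y, Z. -/
def pauli : Fin 4 → Matrix (Fin 2) (Fin 2) ℂ :=
  ![1, !![0, 1; 1, 0], !![0, -Complex.I; Complex.I, 0], !![1, 0; 0, -1]]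

/-- Two-qubit Pauli strings σ₁ ⊗ σ₂. -/
def pauli2 (a : Fin 4 × Fin 4) : Matrix (Fin 2 × Fin 2) (Fin 2 × Fin 2) ℂ :=
  pauli a.1 ⊗ₖ pauli a.2

/-- Rank-one density matrix v vᴴ. -/
def dm {ι : Type*} (v : ι → ℂ) : Matrix ι ι ℂ := Matrix.vecMulVec v (star v)

/-- Stabilizer 2-Rényi entropy of a two-qubit state. -/
def M2two (ψ : Matrix (Fin 2 × Fin 2) (Fin 2 × Fin 2) ℂ) : ℝ :=
  - Real.logb 2 ((1 / 4) * ∑ a : Fin 4 × Fin 4, ‖(pauli2 a * ψ).trace‖ ^ 4)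

/-- The non-local-magic state cos(θ/2)|00⟩ − i sin(θ/2)|11⟩. -/
def vtheta (θ : ℝ) : Fin 2 × Fin 2 → ℂ := fun p =>
  if p = ((0 : Fin 2), (0 : Fin 2)) then (Real.cos (θ / 2) : ℂ)
  else if p = ((1 : Fin 2), (1 : Fin 2)) then -Complex.I * (Real.sin (θ / 2) : ℂ) else 0

lemma abs4_aux (z : ℂ) : ‖z‖ ^ 4 = Complex.normSq z ^ 2 := by
  rw [show (4:ℕ) = 2*2 from rfl, pow_mul, Complex.sq_norm]

lemma key_aux (c s : ℝ) :
    ((1:ℝ) / 4) * ∑ a : Fin 4 × Fin 4,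
      ‖(pauli2 a * dm (fun p : Fin 2 × Fin 2 =>
        if p = (0, 0) then (c : ℂ)
        else if p = (1, 1) then -Complex.I * (s : ℂ) else 0)).trace‖ ^ 4
      = ((c^2+s^2)^2)^2 / 2 + ((c^2-s^2)^2)^2 / 2 + 8 * (c*s)^4 := by
  simp only [abs4_aux]
  simp only [pauli2, pauli, dm, Matrix.trace, Matrix.diag, Matrix.mul_apply,
    Fintype.sum_prod_type, Fin.sum_univ_two, Fin.sum_univ_four, Matrix.kroneckerMap_apply,
    Matrix.vecMulVec_apply, Pi.star_apply, Matrix.cons_val', Matrix.cons_val_zero,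
    Matrix.cons_val_one, Matrix.head_cons, Matrix.head_fin_const, Matrix.one_apply,
    Matrix.cons_val_fin_one, Matrix.empty_val', Matrix.cons_val]
  norm_num [Prod.ext_iff, RCLike.star_def, Complex.normSq_apply, Complex.ext_iff]
  ring

lemma sum_aux (θ : ℝ) :
    ((1:ℝ) / 4) * ∑ a : Fin 4 × Fin 4, ‖(pauli2 a * dm (vtheta θ)).trace‖ ^ 4
      = (7 + Real.cos (4*θ))/8 := by
  have hk := key_aux (Real.cos (θ/2)) (Real.sin (θ/2))
  have hv : vtheta θ = (fun p : Fin 2 × Fin 2 =>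
      if p = (0, 0) then ((Real.cos (θ/2) : ℝ) : ℂ)
      else if p = (1, 1) then -Complex.I * ((Real.sin (θ/2) : ℝ) : ℂ) else 0) := rfl
  rw [hv, hk]
  have h1 : Real.cos θ = 2 * Real.cos (θ/2) ^ 2 - 1 := by
    have := Real.cos_two_mul (θ/2); rw [show 2*(θ/2) = θ by ring] at this; linarith
  have h2 : Real.cos (2*θ) = 2 * Real.cos θ ^ 2 - 1 := Real.cos_two_mul θ
  have h3 : Real.cos (4*θ) = 2 * Real.cos (2*θ) ^ 2 - 1 := by
    have := Real.cos_two_mul (2*θ); rw [show 2*(2*θ) = 4*θ by ring] at this; linarith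
  have hsc := Real.sin_sq_add_cos_sq (θ/2)
  rw [h3, h2, h1]
  generalize Real.cos (θ/2) = c at *
  generalize Real.sin (θ/2) = s at *
  have hs2 : s^2 = 1 - c^2 := by linarith
  rw [show (8:ℝ)*(c*s)^4 = 8*(c^2*s^2)^2 by ring, hs2]; ring

theorem stabilizer_entropy_nlm_state (θ : ℝ) :
    M2two (dm (vtheta θ)) = Real.logb 2 (8 / (7 + Real.cos (4 * θ))) ∧
      M2two (dm (vtheta (Real.pi / 2))) = 0 := by
  have main : ∀ φ : ℝ, M2two (dm (vtheta φ)) = Real.logb 2 (8 / (7 + Real.cos (4 * φ))) := by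
    intro φ
    have hpos : (0:ℝ) < 7 + Real.cos (4*φ) := by
      have := Real.neg_one_le_cos (4*φ); linarith
    rw [M2two, sum_aux φ]
    rw [show (7 + Real.cos (4*φ))/8 = (8 / (7 + Real.cos (4*φ)))⁻¹ by
      field_simp]
    rw [Real.logb_inv, neg_neg]
  refine ⟨main θ, ?_⟩
  rw [main (Real.pi/2), show 4*(Real.pi/2) = 2*Real.pi by ring, Real.cos_two_pi]
  norm_num
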